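/- Let S be a finite set of points of ℝ^n all of norm r > 0 and containing at least two elements, and let y ∈ ℝ^n be such that S_*(y) ≠ S. Then the energy gap satisfies 0 < c(y) ≤ 2 r ‖y‖. -/

import Mathlib

open scoped Classical BigOperators

noncomputable section

/-- `dist(y,S) = min_{x∈S} ‖y−x‖` (as the infimum of a finite nonempty set of reals). -/
def distS {n : ℕ} (S : Finset (EuclideanSpace ℝ (Fin n))) (y : EuclideanSpace ℝ (Fin n)) : ℝ :=
  sInf ((fun x => ‖y - x‖) '' ↑S)

/-- `S_*(y)`, the set of closest points of `S` to `y`. -/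
def Sstar {n : ℕ} (S : Finset (EuclideanSpace ℝ (Fin n))) (y : EuclideanSpace ℝ (Fin n)) :
    Finset (EuclideanSpace ℝ (Fin n)) :=
  S.filter fun x => ‖y - x‖ = distS S y

/-- The energy gap `c(y) = min_{x ∈ S∖S_*(y)} ‖y−x‖²/2 − dist(y,S)²/2`. -/
def gap {n : ℕ} (S : Finset (EuclideanSpace ℝ (Fin n))) (y : EuclideanSpace ℝ (Fin n)) : ℝ :=
  sInf ((fun x => ‖y - x‖ ^ 2 / 2) '' (↑S \ ↑(Sstar S y))) - distS S y ^ 2 / 2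

/-- Lemma 6.7(a) of the paper. If `S ⊂ ℝ^n` is a finite set of points of
common norm `r > 0` with at least two elements, and `y` is such that `S_*(y) ≠ S`, then the
energy gap satisfies `0 < c(y) ≤ 2 r ‖y‖`. -/
theorem statement3 {n : ℕ} (S : Finset (EuclideanSpace ℝ (Fin n))) (r : ℝ) (hr : 0 < r)
    (hnorm : ∀ x ∈ S, ‖x‖ = r) (hcard : 2 ≤ S.card)
    (y : EuclideanSpace ℝ (Fin n)) (hne : Sstar S y ≠ S) :
    0 < gap S y ∧ gap S y ≤ 2 * r * ‖y‖ := by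
  classical
  have hSne : S.Nonempty := Finset.card_pos.mp (by omega)
  have hfin : ((fun x => ‖y - x‖) '' ↑S).Finite := S.finite_toSet.image _
  have hnon : ((fun x => ‖y - x‖) '' ↑S).Nonempty :=
    (Finset.coe_nonempty.mpr hSne).image _
  obtain ⟨x0, hx0S, hx0⟩ : ∃ x0 ∈ S, ‖y - x0‖ = distS S y := by
    obtain ⟨x0, hx0, he⟩ := hnon.csInf_mem hfin
    exact ⟨x0, hx0, he⟩
  have hd_le : ∀ x ∈ S, distS S y ≤ ‖y - x‖ := fun x hx =>
    csInf_le hfin.bddBelow ⟨x, hx, rfl⟩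
  have hd_nonneg : 0 ≤ distS S y := hx0 ▸ norm_nonneg _
  have hsub : Sstar S y ⊆ S := Finset.filter_subset _ _
  obtain ⟨xb, hxbS, hxbN⟩ := Finset.exists_of_ssubset (hsub.ssubset_of_ne hne)
  have hxbmem : xb ∈ (↑S \ ↑(Sstar S y) : Set (EuclideanSpace ℝ (Fin n))) :=
    ⟨hxbS, fun h => hxbN h⟩
  set T : Set ℝ := (fun x => ‖y - x‖ ^ 2 / 2) '' (↑S \ ↑(Sstar S y)) with hT
  have hTfin : T.Finite := (S.finite_toSet.diff).image _
  have hTnon : T.Nonempty := ⟨_, ⟨xb, hxbmem, rfl⟩⟩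
  constructor
  · obtain ⟨x1, hx1mem, hx1⟩ := hTnon.csInf_mem hTfin
    obtain ⟨hx1S, hx1N⟩ := hx1mem
    have hx1S' : x1 ∈ S := hx1S
    have hne1 : ‖y - x1‖ ≠ distS S y := by
      intro h
      exact hx1N (Finset.mem_coe.mpr (Finset.mem_filter.mpr ⟨hx1S', h⟩))
    have hlt : distS S y < ‖y - x1‖ := lt_of_le_of_ne (hd_le x1 hx1S') (Ne.symm hne1)
    have : distS S y ^ 2 < ‖y - x1‖ ^ 2 := by
      exact pow_lt_pow_left₀ hlt hd_nonneg (by norm_num)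
    have : distS S y ^ 2 / 2 < ‖y - x1‖ ^ 2 / 2 := by linarith
    simp only [gap]
    rw [← hT, ← hx1]
    linarith
  · have hg : gap S y ≤ ‖y - xb‖ ^ 2 / 2 - distS S y ^ 2 / 2 := by
      have := csInf_le hTfin.bddBelow (⟨xb, hxbmem, rfl⟩ : (‖y - xb‖ ^ 2 / 2) ∈ T)
      simp only [gap]
      rw [← hT]
      linarith
    have hkey : ‖y - xb‖ ^ 2 - ‖y - x0‖ ^ 2 = 2 * (inner ℝ y (x0 - xb) : ℝ) := by
      rw [inner_sub_right, norm_sub_sq_real, norm_sub_sq_real,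
        hnorm xb hxbS, hnorm x0 hx0S]
      ring
    have hinner : (inner ℝ y (x0 - xb) : ℝ) ≤ ‖y‖ * ‖x0 - xb‖ := real_inner_le_norm _ _
    have hnsub : ‖x0 - xb‖ ≤ 2 * r := by
      calc ‖x0 - xb‖ ≤ ‖x0‖ + ‖xb‖ := norm_sub_le _ _
        _ = 2 * r := by rw [hnorm x0 hx0S, hnorm xb hxbS]; ring
    have : (inner ℝ y (x0 - xb) : ℝ) ≤ 2 * r * ‖y‖ := by
      calc (inner ℝ y (x0 - xb) : ℝ) ≤ ‖y‖ * ‖x0 - xb‖ := hinner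
        _ ≤ ‖y‖ * (2 * r) := by
            exact mul_le_mul_of_nonneg_left hnsub (norm_nonneg _)
        _ = 2 * r * ‖y‖ := by ring
    rw [← hx0] at hg
    linarith

end
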